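/- arXiv:2504.02344 — 2 statements merged into one kernel-verified Lean document; each statement's English description precedes it below -/
import Mathlib

section
/- Let G be a directed graph with edge relation E = SO ∪ WR ∪ WW ∪ RW where WW⁺ = WW (WW is transitive), and suppose RW ⊆ RW₀ ∘ WW* for some RW₀ ⊆ RW, and WW ⊆ ŴW⁺ for some ŴW ⊆ WW. Let Ê = SO ∪ WR ∪ ŴW ∪ RW₀. Then E is acyclic if and only if Ê is acyclic. -/
private lemma transGen_subset_transGen {T : Type*} {E F : T → T → Prop}
    (h : ∀ a b, E a b → Relation.TransGen F a b) :
    ∀ a b, Relation.TransGen E a b → Relation.TransGen F a b := by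
  intro a b hab
  induction hab with
  | single h1 => exact h _ _ h1
  | tail _ h1 ih => exact ih.trans (h _ _ h1)

/-- Replacing WW by a generating subrelation ŴW and RW by RW₀ (with RW ⊆ RW₀ ∘ WW*)
    preserves acyclicity of the union. -/
theorem acyclic_union_iff_reduced {T : Type*}
    (SO WR WW RW RW0 WWhat : T → T → Prop)
    (hWWtrans : Transitive WW)
    (hRW0sub : ∀ a b, RW0 a b → RW a b)
    (hRWfact : ∀ a b, RW a b → Relation.Comp RW0 (Relation.ReflTransGen WW) a b)
    (hWWhatsub : ∀ a b, WWhat a b → WW a b)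
    (hWWgen : ∀ a b, WW a b → Relation.TransGen WWhat a b) :
    (∀ a, ¬ Relation.TransGen (fun u v => SO u v ∨ WR u v ∨ WW u v ∨ RW u v) a a) ↔
    (∀ a, ¬ Relation.TransGen (fun u v => SO u v ∨ WR u v ∨ WWhat u v ∨ RW0 u v) a a) := by
  set E := fun u v => SO u v ∨ WR u v ∨ WW u v ∨ RW u v with hE
  set F := fun u v => SO u v ∨ WR u v ∨ WWhat u v ∨ RW0 u v with hF
  have hFE : ∀ a b, F a b → E a b := by
    intro a b h
    rcases h with h | h | h | h
    · exact Or.inl h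
    · exact Or.inr (Or.inl h)
    · exact Or.inr (Or.inr (Or.inl (hWWhatsub _ _ h)))
    · exact Or.inr (Or.inr (Or.inr (hRW0sub _ _ h)))
  have hWWF : ∀ a b, WW a b → Relation.TransGen F a b := by
    intro a b h
    exact Relation.TransGen.mono (fun x y hxy => Or.inr (Or.inr (Or.inl hxy))) a b (hWWgen a b h)
  have hEF : ∀ a b, E a b → Relation.TransGen F a b := by
    intro a b h
    rcases h with h | h | h | h
    · exact Relation.TransGen.single (Or.inl h)
    · exact Relation.TransGen.single (Or.inr (Or.inl h))
    · exact hWWF _ _ h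
    · obtain ⟨c, hc1, hc2⟩ := hRWfact _ _ h
      have h1 : Relation.TransGen F a c := Relation.TransGen.single (Or.inr (Or.inr (Or.inr hc1)))
      clear h
      induction hc2 with
      | refl => exact h1
      | tail _ hWW ih => exact ih.trans (hWWF _ _ hWW)
  constructor
  · intro hac a hcyc
    exact hac a ((Relation.TransGen.mono hFE a a hcyc))
  · intro hac a hcyc
    exact hac a (transGen_subset_transGen hEF a a hcyc)
end

section
/- If a relation SO on a finite set T is a disjoint union of strict total orders on the blocks of a partition of T (sessions), then SO equals the transitive closure of its covering relation (successor relation within each session), and replacing SO by its covering relation in any union E = SO ∪ X preserves acyclicity: SO ∪ X is acyclic iff cover(SO) ∪ X is acyclic, for any relation X on T. -/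
/-- A disjoint union of per-session strict total orders equals the transitive closure of
    its covering relation, and replacing it by the covering relation in any union
    preserves acyclicity. -/
theorem session_order_cover {T : Type*} [Fintype T] {S : Type*} (session : T → S)
    (SO : T → T → Prop)
    (hsess : ∀ a b, SO a b → session a = session b)
    (hirr : Irreflexive SO) (htrans : Transitive SO)
    (htotal : ∀ a b, a ≠ b → session a = session b → SO a b ∨ SO b a) :
    let cover : T → T → Prop := fun a b => SO a b ∧ ¬ ∃ c, SO a c ∧ SO c b
    (SO = fun a b => Relation.TransGen cover a b) ∧
    (∀ X : T → T → Prop,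
      (∀ a, ¬ Relation.TransGen (fun u v => SO u v ∨ X u v) a a) ↔
      (∀ a, ¬ Relation.TransGen (fun u v => cover u v ∨ X u v) a a)) := by
  classical
  intro cover
  have hmain : ∀ n a b, SO a b →
      (Finset.univ.filter (fun c => SO a c ∧ SO c b)).card ≤ n →
      Relation.TransGen cover a b := by
    intro n
    induction n with
    | zero =>
      intro a b hab hcard
      refine Relation.TransGen.single ⟨hab, ?_⟩
      rintro ⟨c, hc1, hc2⟩
      have hm : c ∈ Finset.univ.filter (fun c => SO a c ∧ SO c b) := by
        simp [hc1, hc2]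
      rw [Finset.card_eq_zero.mp (Nat.le_zero.mp hcard)] at hm
      simp at hm
    | succ n ih =>
      intro a b hab hcard
      by_cases h : ∃ c, SO a c ∧ SO c b
      · obtain ⟨c, hac, hcb⟩ := h
        have h1 : Finset.univ.filter (fun d => SO a d ∧ SO d c) ⊂
            Finset.univ.filter (fun d => SO a d ∧ SO d b) := by
          refine (Finset.ssubset_iff_of_subset ?_).mpr ⟨c, by simp [hac, hcb], by
            simp; intro _ hcc; exact absurd hcc (hirr c)⟩
          intro d hd
          simp only [Finset.mem_filter, Finset.mem_univ, true_and] at hd ⊢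
          exact ⟨hd.1, htrans hd.2 hcb⟩
        have h2 : Finset.univ.filter (fun d => SO c d ∧ SO d b) ⊂
            Finset.univ.filter (fun d => SO a d ∧ SO d b) := by
          refine (Finset.ssubset_iff_of_subset ?_).mpr ⟨c, by simp [hac, hcb], by
            simp; intro hcc; exact absurd hcc (hirr c)⟩
          intro d hd
          simp only [Finset.mem_filter, Finset.mem_univ, true_and] at hd ⊢
          exact ⟨htrans hac hd.1, hd.2⟩
        have c1 := Finset.card_lt_card h1
        have c2 := Finset.card_lt_card h2
        exact Relation.TransGen.trans
          (ih a c hac (Nat.lt_succ_iff.mp (lt_of_lt_of_le c1 hcard)))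
          (ih c b hcb (Nat.lt_succ_iff.mp (lt_of_lt_of_le c2 hcard)))
      · exact Relation.TransGen.single ⟨hab, h⟩
  have hSO : ∀ a b, SO a b → Relation.TransGen cover a b := fun a b hab =>
    hmain (Finset.univ.filter (fun c => SO a c ∧ SO c b)).card a b hab le_rfl
  have hback : ∀ a b, Relation.TransGen cover a b → SO a b := by
    intro a b h
    induction h with
    | single h => exact h.1
    | tail _ h ih => exact htrans ih h.1
  have heq : SO = fun a b => Relation.TransGen cover a b := by
    funext a b
    exact propext ⟨hSO a b, hback a b⟩
  refine ⟨heq, fun X => ⟨fun h a hc => h a ?_, fun h a hc => h a ?_⟩⟩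
  · exact Relation.TransGen.mono (fun u v (huv : cover u v ∨ X u v) => huv.imp (fun hc => hc.1) id) _ _ hc
  · have hsub : ∀ u v, (SO u v ∨ X u v) →
        Relation.TransGen (fun u v => cover u v ∨ X u v) u v := by
      intro u v huv
      rcases huv with huv | huv
      · exact Relation.TransGen.mono (fun x y hxy => Or.inl hxy) _ _ (hSO u v huv)
      · exact Relation.TransGen.single (Or.inr huv)
    have := Relation.TransGen.mono hsub _ _ hc
    rwa [Relation.transGen_idem] at this
end
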